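/- Let m, n ∈ ℕ with n ≥ 2, ℓ ∈ ℕ₀, c ∈ ℝ, and z ∈ ℂ. For the function u(r) = r^z on (0,∞), applying the m-fold iterate of the map f ↦ −f'' + ((n+2ℓ−1)(n+2ℓ−3)/(4r²))·f to u and adding c·r^{−2m}·u(r) yields D_{m,n,ℓ}(c;z)·r^{z−2m} for every r > 0; that is, τ_{m,n,ℓ}(c) r^z = D_{m,n,ℓ}(c;z) r^{z−2m}. -/
import Mathlib

noncomputable section



/-- The degree-`2m` polynomial
`D_{m,n,ℓ}(c;z) = (-1)^m ∏_{j=1}^m (z - (n+2ℓ+4j-5)/2)(z + (n+2ℓ-4j+1)/2) + c`. -/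
def Dm (m n ℓ : ℕ) (c : ℝ) (z : ℂ) : ℂ :=
  (-1) ^ m * ∏ j ∈ Finset.Icc 1 m,
      ((z - ((n : ℂ) + 2 * ℓ + 4 * j - 5) / 2) * (z + ((n : ℂ) + 2 * ℓ - 4 * j + 1) / 2))
    + (c : ℂ)

/-- The formal differential expression `f ↦ -f'' + ((n+2ℓ-1)(n+2ℓ-3)/(4r²))·f`. -/
def negB (n ℓ : ℕ) (f : ℝ → ℂ) : ℝ → ℂ := fun r =>
  -(deriv (deriv f) r)
    + (((((n : ℝ) + 2 * ℓ - 1) * ((n : ℝ) + 2 * ℓ - 3)) / (4 * r ^ 2) : ℝ) : ℂ) * f r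

open Complex Filter

/-- derivative of the real-to-complex power function at positive points -/
lemma L1 (w : ℂ) {x : ℝ} (hx : 0 < x) :
    HasDerivAt (fun s : ℝ => (s : ℂ) ^ w) (w * (x : ℂ) ^ (w - 1)) x := by
  have h := (((hasDerivAt_id (x : ℂ)).cpow_const (c := w)
      (Complex.ofReal_mem_slitPlane.2 hx)).comp_ofReal (z := x))
  simpa using h

lemma L2 (w : ℂ) {x : ℝ} (hx : 0 < x) :
    deriv (fun s : ℝ => (s : ℂ) ^ w) x = w * (x : ℂ) ^ (w - 1) :=
  (L1 w hx).deriv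

/-- negB only depends on the local germ -/
lemma negB_congr (n ℓ : ℕ) {f g : ℝ → ℂ} {r : ℝ} (h : f =ᶠ[nhds r] g) :
    negB n ℓ f r = negB n ℓ g r := by
  unfold negB
  rw [h.eq_of_nhds, (h.deriv).deriv_eq]

lemma negB_pow (n ℓ : ℕ) (A w : ℂ) {r : ℝ} (hr : 0 < r) :
    negB n ℓ (fun s : ℝ => A * (s : ℂ) ^ w) r
      = A * ((((n : ℂ) + 2 * ℓ - 1) * ((n : ℂ) + 2 * ℓ - 3)) / 4 - w * (w - 1))
          * (r : ℂ) ^ (w - 2) := by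
  have hd1 : deriv (deriv fun s : ℝ => A * (s : ℂ) ^ w) r
      = A * w * ((w - 1) * (r : ℂ) ^ (w - 1 - 1)) := by
    have he : (deriv fun s : ℝ => A * (s : ℂ) ^ w)
        =ᶠ[nhds r] fun s : ℝ => A * w * (s : ℂ) ^ (w - 1) := by
      filter_upwards [eventually_gt_nhds hr] with s hs
      rw [deriv_const_mul _ (L1 w hs).differentiableAt, L2 w hs]
      ring
    rw [he.deriv_eq]
    have := ((L1 (w - 1) hr).const_mul (A * w)).deriv
    simpa [mul_assoc] using this
  have hrc : (r : ℂ) ≠ 0 := Complex.ofReal_ne_zero.2 hr.ne'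
  have hpow : (r : ℂ) ^ (w - 2) * (r : ℂ) ^ (2 : ℂ) = (r : ℂ) ^ w := by
    rw [← Complex.cpow_add _ _ hrc]; ring_nf
  have hpow2 : (r : ℂ) ^ (2 : ℂ) = (r : ℂ) ^ (2 : ℕ) := by
    rw [← Complex.cpow_natCast]; norm_num
  have hpow1 : (r : ℂ) ^ (w - 1 - 1) = (r : ℂ) ^ (w - 2) := by ring_nf
  unfold negB
  rw [hd1, hpow1]
  beta_reduce
  have hfin : ((((n : ℝ) + 2 * ℓ - 1) * ((n : ℝ) + 2 * ℓ - 3)) / (4 * r ^ 2) : ℝ) * 1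
      = ((((n : ℝ) + 2 * ℓ - 1) * ((n : ℝ) + 2 * ℓ - 3)) / (4 * r ^ 2) : ℝ) := mul_one _
  have hr2 : ((r : ℂ) ^ (2 : ℕ)) ≠ 0 := pow_ne_zero _ hrc
  have : (r : ℂ) ^ w = (r : ℂ) ^ (w - 2) * (r : ℂ) ^ (2 : ℕ) := by
    rw [← hpow2, hpow]
  rw [this]
  push_cast
  field_simp
  ring

/-- the core induction -/
lemma iter_pow (n ℓ : ℕ) (z : ℂ) (k : ℕ) {r : ℝ} (hr : 0 < r) :
    (negB n ℓ)^[k] (fun s : ℝ => (s : ℂ) ^ z) r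
      = ((-1) ^ k * ∏ j ∈ Finset.Icc 1 k,
          ((z - ((n : ℂ) + 2 * ℓ + 4 * j - 5) / 2) * (z + ((n : ℂ) + 2 * ℓ - 4 * j + 1) / 2)))
        * (r : ℂ) ^ (z - 2 * k) := by
  induction k generalizing r with
  | zero => simp
  | succ k ih =>
    rw [Function.iterate_succ_apply']
    set A : ℂ := (-1) ^ k * ∏ j ∈ Finset.Icc 1 k,
        ((z - ((n : ℂ) + 2 * ℓ + 4 * j - 5) / 2) * (z + ((n : ℂ) + 2 * ℓ - 4 * j + 1) / 2)) with hA
    have hcong : (negB n ℓ)^[k] (fun s : ℝ => (s : ℂ) ^ z)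
        =ᶠ[nhds r] fun s : ℝ => A * (s : ℂ) ^ (z - 2 * k) := by
      filter_upwards [eventually_gt_nhds hr] with s hs
      exact ih hs
    rw [negB_congr n ℓ hcong, negB_pow n ℓ A (z - 2 * k) hr]
    have hexp : (z - 2 * k - 2 : ℂ) = z - 2 * (k + 1 : ℕ) := by push_cast; ring
    rw [hexp]
    congr 1
    rw [Finset.prod_Icc_succ_top (Nat.le_add_left 1 k)]
    push_cast
    ring

/-- `τ_{m,n,ℓ}(c) r^z = D_{m,n,ℓ}(c;z) r^{z-2m}` on `(0,∞)`. -/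
theorem stmt14 (m n ℓ : ℕ) (hm : 1 ≤ m) (hn : 2 ≤ n) (c : ℝ) (z : ℂ)
    (r : ℝ) (hr : 0 < r) :
    (negB n ℓ)^[m] (fun s : ℝ => (s : ℂ) ^ z) r
        + (c : ℂ) * ((r : ℂ) ^ (2 * m))⁻¹ * (r : ℂ) ^ z
      = Dm m n ℓ c z * (r : ℂ) ^ (z - 2 * (m : ℂ)) := by
  have hrc : (r : ℂ) ≠ 0 := Complex.ofReal_ne_zero.2 hr.ne'
  rw [iter_pow n ℓ z m hr]
  have hexp : (z - 2 * (m : ℕ) : ℂ) = z - 2 * (m : ℂ) := by push_cast; ring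
  rw [hexp]
  have hcpow : (r : ℂ) ^ (z - 2 * (m : ℂ)) = (r : ℂ) ^ z * ((r : ℂ) ^ (2 * m))⁻¹ := by
    rw [Complex.cpow_sub _ _ hrc, div_eq_mul_inv]
    congr 2
    rw [show ((2 : ℂ) * m) = ((2 * m : ℕ) : ℂ) by push_cast; ring, Complex.cpow_natCast]
  rw [hcpow, Dm]
  ring
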